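/- If p = q = 1/2, then lim_{s→0+} √(2s)·Ĝ(y,s) = 2y + 1/β; equivalently Ĝ(y,s) ~ (2y + 1/β)/√(2s) as s → 0+. -/
import Mathlib


open Filter Topology
noncomputable section

/-- `ξ₊(s)`, the solution of `ε(ξ) = s` with the positive square root, where
`ε(ξ) = pξ⁻¹ + qξ - 1`. -/
def xiPlus (p q s : ℝ) : ℝ := (s + 1 + Real.sqrt ((s + 1) ^ 2 - 4 * p * q)) / (2 * q)

/-- The Laplace transform `Ĝ(y,s) = (1/s)[1 - β ξ₊(s)^{-y}/(q(ξ₊(s)-1) + β)]` of the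
probability that, in ASEP on `ℤ⁺` with ejection rate `β` at the boundary and no injection,
a single particle started at `y` has not yet been ejected at time `t`. -/
def Ghat (p q β : ℝ) (y : ℕ) (s : ℝ) : ℝ :=
  (1 / s) * (1 - β * xiPlus p q s ^ (-(y : ℤ)) / (q * (xiPlus p q s - 1) + β))

/-- Tracy–Widom, survival of a single particle in open SSEP (`p = q = 1/2`) with ejection
only: `Ĝ(y,s) ~ (2y + 1/β)/√(2s)` as `s → 0⁺`, i.e.
`lim_{s→0⁺} √(2s) Ĝ(y,s) = 2y + 1/β`. -/
theorem survival_asymptotics_p_eq_q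
    (p q β : ℝ) (hp : p = 1/2) (hq : q = 1/2) (hβ : 0 < β) (y : ℕ) :
    Tendsto (fun s => Real.sqrt (2 * s) * Ghat p q β y s) (𝓝[>] (0:ℝ))
      (𝓝 (2 * y + 1 / β)) := by
  subst hp hq
  set g : ℝ → ℝ := fun s => s + 1 + Real.sqrt (s * (s + 2)) with hg
  set h : ℝ → ℝ := fun s =>
    Real.sqrt 2 * (Real.sqrt s + Real.sqrt (s + 2)) *
      (((g s) ^ y / 2 + β * ∑ k ∈ Finset.range y, (g s) ^ k) /
        ((g s) ^ y * ((g s - 1) / 2 + β))) with hh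
  have hxi : ∀ s : ℝ, xiPlus (1/2) (1/2) s = g s := by
    intro s
    unfold xiPlus
    rw [show (s+1)^2 - 4*(1/2:ℝ)*(1/2) = s*(s+2) by ring]
    norm_num [hg]
  have hg0 : g 0 = 1 := by simp [hg]
  have hht : Tendsto h (𝓝[>] (0:ℝ)) (𝓝 (2 * y + 1 / β)) := by
    have hgc : ContinuousAt g 0 := by fun_prop
    have hhc : ContinuousAt h 0 := by
      apply ContinuousAt.mul (by fun_prop)
      apply ContinuousAt.div (by fun_prop) (by fun_prop)
      rw [hg0]; simpa using hβ.ne'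
    have h0 : h 0 = 2 * y + 1 / β := by
      simp only [hh, hg0]
      simp only [Real.sqrt_zero, one_pow, Finset.sum_const, Finset.card_range, nsmul_eq_mul,
        mul_one, zero_add]
      rw [Real.mul_self_sqrt (by norm_num : (0:ℝ) ≤ 2)]
      field_simp
      ring
    rw [← h0]
    exact (hhc.tendsto).mono_left nhdsWithin_le_nhds
  apply hht.congr'
  filter_upwards [self_mem_nhdsWithin] with s hs
  have hs' : (0:ℝ) < s := hs
  have hr0 : 0 ≤ Real.sqrt (s * (s + 2)) := Real.sqrt_nonneg _
  have hgs : g s = s + 1 + Real.sqrt (s * (s + 2)) := rfl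
  have hg1 : 1 < g s := by rw [hgs]; linarith
  have hss : Real.sqrt s * Real.sqrt s = s := Real.mul_self_sqrt hs'.le
  have h2s : Real.sqrt (2 * s) = Real.sqrt 2 * Real.sqrt s := Real.sqrt_mul (by norm_num) s
  have hrm : Real.sqrt (s * (s + 2)) = Real.sqrt s * Real.sqrt (s + 2) :=
    Real.sqrt_mul hs'.le _
  have htm1 : g s - 1 = s + Real.sqrt s * Real.sqrt (s + 2) := by rw [hgs, hrm]; ring
  refine Eq.symm ?_
  show Real.sqrt (2*s) * Ghat (1/2) (1/2) β y s = h s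
  rw [Ghat, hxi, h2s, zpow_neg, zpow_natCast]
  simp only [hh]
  generalize hT : g s = t at htm1 hg1 ⊢
  have ht0 : (0:ℝ) < t := by linarith
  have ha : (0:ℝ) < t ^ y := pow_pos ht0 y
  have hD : (0:ℝ) < (1/2) * (t - 1) + β := by nlinarith
  have hgeom : (∑ k ∈ Finset.range y, t ^ k) * (t - 1) = t ^ y - 1 := geom_sum_mul t y
  have hane : t ^ y ≠ 0 := ha.ne'
  have hDne : (1/2:ℝ) * (t - 1) + β ≠ 0 := hD.ne'
  have key : 1 - β * (t ^ y)⁻¹ / ((1/2) * (t - 1) + β)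
      = (t - 1) * (t ^ y / 2 + β * ∑ k ∈ Finset.range y, t ^ k)
        / (t ^ y * ((t - 1) / 2 + β)) := by
    have hnum : (t - 1) * (t ^ y / 2 + β * ∑ k ∈ Finset.range y, t ^ k)
        = t ^ y * ((1/2) * (t - 1) + β) - β := by linear_combination β * hgeom
    rw [show (t - 1)/2 + β = (1/2)*(t - 1)+β by ring, hnum,
      ← div_eq_mul_inv, div_div, sub_div, div_self (mul_ne_zero hane hDne)]
  rw [key]
  have hkey2 : Real.sqrt 2 * Real.sqrt s * (t - 1)
      = s * (Real.sqrt 2 * (Real.sqrt s + Real.sqrt (s + 2))) := by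
    rw [htm1]; linear_combination (Real.sqrt 2 * Real.sqrt (s + 2)) * hss
  have hD'ne : (t - 1)/2 + β ≠ 0 := by
    rw [show (t - 1)/2 + β = (1/2)*(t - 1)+β by ring]; exact hDne
  rw [show Real.sqrt 2 * Real.sqrt s *
        (1/s * ((t - 1) * (t ^ y / 2 + β * ∑ k ∈ Finset.range y, t ^ k)
          / (t ^ y * ((t - 1) / 2 + β))))
      = (Real.sqrt 2 * Real.sqrt s * (t - 1)) * ((t ^ y / 2 + β * ∑ k ∈ Finset.range y, t ^ k)
          / (t ^ y * ((t - 1) / 2 + β))) / s by ring, hkey2]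
  rw [show s * (Real.sqrt 2 * (Real.sqrt s + Real.sqrt (s + 2))) *
        ((t ^ y / 2 + β * ∑ k ∈ Finset.range y, t ^ k) / (t ^ y * ((t - 1) / 2 + β))) / s
      = Real.sqrt 2 * (Real.sqrt s + Real.sqrt (s + 2)) *
        ((t ^ y / 2 + β * ∑ k ∈ Finset.range y, t ^ k) / (t ^ y * ((t - 1) / 2 + β))) * (s / s)
      by ring, div_self hs'.ne', mul_one]
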